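/- arXiv:2303.00869 — 8 statements merged into one kernel-verified Lean document; each statement's English description precedes it below -/
import Mathlib

section
/- Let g ≥ 0 be an integer, ε ∈ [0,1], and let p(q_i, q_j) = 1{q_j − q_i ≥ g+1} + (1−ε)·1{0 < q_j − q_i ≤ g} + ε·1{0 < q_i − q_j ≤ g} + 1{q_i = q_j and i < j}, for nonnegative integers q_i, q_j and distinct indices i, j. Then q_i·p(q_i,q_j) + q_j·p(q_j,q_i) ≤ (q_i + q_j)/2 + g·1{ε > 1/2}. -/
/-- Join probability under the Po2-(g,ε) scheme with load-dependent errors. -/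
noncomputable def po2geProb (g : ℕ) (ε : ℝ) (qi qj i j : ℕ) : ℝ :=
  (if (g : ℤ) + 1 ≤ (qj : ℤ) - (qi : ℤ) then 1 else 0)
  + (1 - ε) * (if 0 < (qj : ℤ) - (qi : ℤ) ∧ (qj : ℤ) - (qi : ℤ) ≤ (g : ℤ) then 1 else 0)
  + ε * (if 0 < (qi : ℤ) - (qj : ℤ) ∧ (qi : ℤ) - (qj : ℤ) ≤ (g : ℤ) then 1 else 0)
  + (if qi = qj ∧ i < j then 1 else 0)

lemma po2ge_aux (g : ℕ) (ε : ℝ) (hε0 : 0 ≤ ε) (hε1 : ε ≤ 1)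
    (qi qj i j : ℕ) (hij : i ≠ j) (h : qi ≤ qj) :
    (qi : ℝ) * po2geProb g ε qi qj i j + (qj : ℝ) * po2geProb g ε qj qi j i
      ≤ ((qi : ℝ) + (qj : ℝ)) / 2 + (g : ℝ) * (if ε > 1/2 then 1 else 0) := by
  have hgind : (0:ℝ) ≤ (g : ℝ) * (if ε > 1/2 then 1 else 0) := by
    split_ifs <;> simp [Nat.cast_nonneg]
  rcases eq_or_lt_of_le h with heq | hlt
  · subst heq
    simp only [po2geProb, sub_self]
    have h1 : ¬ ((g:ℤ) + 1 ≤ 0) := by omega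
    have h2 : ¬ ((0:ℤ) < 0 ∧ (0:ℤ) ≤ (g:ℤ)) := by omega
    rw [if_neg h1, if_neg h2]
    rcases lt_or_gt_of_ne hij with hlt' | hlt'
    · simp only [eq_self_iff_true, true_and, if_pos hlt', if_neg (Nat.lt_asymm hlt')]
      linarith
    · simp only [eq_self_iff_true, true_and, if_pos hlt', if_neg (Nat.lt_asymm hlt')]
      linarith
  · have hd : (0:ℤ) < (qj:ℤ) - (qi:ℤ) := by omega
    have hne : qi ≠ qj := Nat.ne_of_lt hlt
    have hne' : qj ≠ qi := (Nat.ne_of_lt hlt).symm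
    simp only [po2geProb]
    rw [if_neg (by simp [hne] : ¬ (qi = qj ∧ i < j)),
        if_neg (by simp [hne'] : ¬ (qj = qi ∧ j < i)),
        if_neg (by omega : ¬ ((g:ℤ) + 1 ≤ (qi:ℤ) - (qj:ℤ))),
        if_neg (by omega : ¬ ((0:ℤ) < (qi:ℤ) - (qj:ℤ) ∧ (qi:ℤ) - (qj:ℤ) ≤ (g:ℤ)))]
    by_cases hbig : (g:ℤ) + 1 ≤ (qj:ℤ) - (qi:ℤ)
    · rw [if_pos hbig, if_neg (by omega : ¬ ((0:ℤ) < (qj:ℤ) - (qi:ℤ) ∧ (qj:ℤ) - (qi:ℤ) ≤ (g:ℤ)))]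
      have : (qi:ℝ) ≤ (qj:ℝ) := by exact_mod_cast h
      linarith
    · have hle : (qj:ℤ) - (qi:ℤ) ≤ (g:ℤ) := by omega
      rw [if_neg hbig, if_pos (⟨hd, hle⟩ : (0:ℤ) < (qj:ℤ) - (qi:ℤ) ∧ (qj:ℤ) - (qi:ℤ) ≤ (g:ℤ))]
      have hdr : (0:ℝ) < (qj:ℝ) - (qi:ℝ) := by exact_mod_cast hd
      have hler : (qj:ℝ) - (qi:ℝ) ≤ (g:ℝ) := by exact_mod_cast hle
      split_ifs with hε
      · nlinarith
      · push_neg at hε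
        nlinarith
  
theorem po2ge_weighted_bound (g : ℕ) (ε : ℝ) (hε0 : 0 ≤ ε) (hε1 : ε ≤ 1)
    (qi qj i j : ℕ) (hij : i ≠ j) :
    (qi : ℝ) * po2geProb g ε qi qj i j + (qj : ℝ) * po2geProb g ε qj qi j i
      ≤ ((qi : ℝ) + (qj : ℝ)) / 2 + (g : ℝ) * (if ε > 1/2 then 1 else 0) := by
  rcases le_total qi qj with h | h
  · exact po2ge_aux g ε hε0 hε1 qi qj i j hij h
  · have := po2ge_aux g ε hε0 hε1 qj qi j i (Ne.symm hij) h
    linarith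
end

section
/- Let ε ∈ [0,1] and define p(q_i, q_j) = (1−ε)·1{q_i < q_j} + ε·1{q_i > q_j} + 1{q_i = q_j and i < j} for nonnegative integers q_i, q_j and distinct indices i, j. Then q_i·p(q_i,q_j) + q_j·p(q_j,q_i) ≤ (q_i + q_j)·max(1/2, ε). -/
/-- Join probability under the Po2-ε scheme with load-independent errors. -/
noncomputable def po2epsProb (ε : ℝ) (qi qj i j : ℕ) : ℝ :=
  (1 - ε) * (if qi < qj then 1 else 0) + ε * (if qj < qi then 1 else 0)
  + (if qi = qj ∧ i < j then 1 else 0)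

theorem po2eps_weighted_bound (ε : ℝ) (hε0 : 0 ≤ ε) (hε1 : ε ≤ 1)
    (qi qj i j : ℕ) (hij : i ≠ j) :
    (qi : ℝ) * po2epsProb ε qi qj i j + (qj : ℝ) * po2epsProb ε qj qi j i
      ≤ ((qi : ℝ) + (qj : ℝ)) * max (1/2) ε := by
  have hm : (1:ℝ)/2 ≤ max (1/2) ε := le_max_left _ _
  have hm2 : ε ≤ max (1/2) ε := le_max_right _ _
  have hq : (0:ℝ) ≤ (qi:ℝ) + qj := by positivity
  unfold po2epsProb
  rcases lt_trichotomy qi qj with h | h | h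
  · have h' : (qi:ℝ) ≤ qj := by exact_mod_cast h.le
    simp [h, h.not_gt, h.ne, h.ne']
    rcases le_total ε (1/2) with he | he
    · have := mul_le_mul_of_nonneg_left hm hq; nlinarith [this]
    · have := mul_le_mul_of_nonneg_left hm2 hq; nlinarith [this]
  · subst h
    simp [lt_irrefl]
    rcases Nat.lt_or_ge i j with hij' | hij'
    · simp [hij', hij'.not_gt]; nlinarith
    · have : j < i := lt_of_le_of_ne hij' (Ne.symm hij)
      simp [this, this.not_gt]; nlinarith
  · have h' : (qj:ℝ) ≤ qi := by exact_mod_cast h.le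
    simp [h, h.not_gt, h.ne, h.ne']
    rcases le_total ε (1/2) with he | he
    · have := mul_le_mul_of_nonneg_left hm hq; nlinarith [this]
    · have := mul_le_mul_of_nonneg_left hm2 hq; nlinarith [this]
end

section
/- Let S = {s : ℕ → ℝ : s_0 = 1, 1 ≥ s_i ≥ s_{i+1} ≥ 0 for all i ≥ 1, and Σ_{i≥1} s_i < ∞} with the ℓ¹ norm. For λ > 0, ε ∈ [0,1], g ≥ 0, define G_i(s) = λ·p_{i−1}(s) − (s_i − s_{i+1}), where p_{i−1}(s) = (s_{i−1} − s_i)[2ε(s_{i+g} + s_{i−1−g}) + (1−2ε)(s_i + s_{i−1})] (with s_j = 1 for j ≤ 0). Then G : S → ℝ^∞ is Lipschitz in ℓ¹ with Lipschitz constant λ(16ε + 4) + 2, i.e., Σ_{i≥1} |G_i(x) − G_i(y)| ≤ (λ(16ε+4)+2)·Σ_{i≥1} |x_i − y_i| for all x, y ∈ S. -/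
/-- Arrival probability under the Po2-(g,ε) scheme in the mean-field limit. -/
noncomputable def po2geArr (ε : ℝ) (g : ℕ) (s : ℤ → ℝ) (i : ℤ) : ℝ :=
  (s (i - 1) - s i) *
    (2 * ε * (s (i + g) + s (i - 1 - g)) + (1 - 2 * ε) * (s i + s (i - 1)))

/-- Drift function of the Po2-(g,ε) mean-field. -/
noncomputable def po2geDrift (lam ε : ℝ) (g : ℕ) (s : ℤ → ℝ) (i : ℤ) : ℝ :=
  lam * po2geArr ε g s i - (s i - s (i + 1))

theorem po2geDrift_lipschitz (lam ε : ℝ) (hlam : 0 < lam)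
    (hε0 : 0 ≤ ε) (hε1 : ε ≤ 1) (g : ℕ)
    (x y : ℤ → ℝ)
    (hxmono : ∀ i j : ℤ, i ≤ j → x j ≤ x i)
    (hymono : ∀ i j : ℤ, i ≤ j → y j ≤ y i)
    (hxbd : ∀ i : ℤ, 0 ≤ x i ∧ x i ≤ 1) (hybd : ∀ i : ℤ, 0 ≤ y i ∧ y i ≤ 1)
    (hxone : ∀ i : ℤ, i ≤ 0 → x i = 1) (hyone : ∀ i : ℤ, i ≤ 0 → y i = 1)
    (hxsum : Summable (fun n : ℕ => x (n + 1)))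
    (hysum : Summable (fun n : ℕ => y (n + 1))) :
    ∑' n : ℕ, |po2geDrift lam ε g x (n + 1) - po2geDrift lam ε g y (n + 1)|
      ≤ (lam * (16 * ε + 4) + 2) * ∑' n : ℕ, |x (n + 1) - y (n + 1)| := by
  set d : ℤ → ℝ := fun i => |x i - y i| with hd
  have hdnn : ∀ i, 0 ≤ d i := fun i => abs_nonneg _
  have hd0 : ∀ i : ℤ, i ≤ 0 → d i = 0 := by
    intro i hi; simp [hd, hxone i hi, hyone i hi]
  have hN : Summable (fun n : ℕ => d ((n : ℤ) + 1)) := by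
    simpa [hd] using (hxsum.sub hysum).abs
  have hdsum : Summable d := by
    refine Summable.of_add_one_of_neg_add_one hN ?_
    have : (fun n : ℕ => d (-((n : ℤ) + 1))) = fun _ => (0 : ℝ) := by
      funext n
      exact hd0 _ (by omega)
    rw [this]; exact summable_zero
  set D : ℝ := ∑' n : ℕ, d ((n : ℤ) + 1) with hDdef
  have hDZ : ∑' i : ℤ, d i = D := by
    refine tsum_eq_tsum_of_ne_zero_bij
      (fun n => ((n : ℕ) : ℤ) + 1) ?_ ?_ ?_
    · intro a b hab
      have h1 : ((a : ℕ) : ℤ) + 1 = ((b : ℕ) : ℤ) + 1 := hab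
      have h2 : ((a : ℕ) : ℕ) = ((b : ℕ) : ℕ) := by exact_mod_cast add_right_cancel h1
      exact Subtype.ext h2
    · intro j hj
      have hj1 : 1 ≤ j := by
        by_contra h
        exact hj (hd0 j (by omega))
      refine ⟨⟨(j - 1).toNat, ?_⟩, ?_⟩
      · have hje : ((j - 1).toNat : ℤ) + 1 = j := by omega
        show d (((j - 1).toNat : ℤ) + 1) ≠ 0
        rw [hje]; exact hj
      · simp only
        omega
    · intro n; rfl
  have key : ∀ c : ℤ, Summable (fun n : ℕ => d ((n : ℤ) + c)) ∧
      ∑' n : ℕ, d ((n : ℤ) + c) ≤ D := by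
    intro c
    have hsc : Summable (fun i : ℤ => d (i + c)) := by
      simpa [Function.comp_def] using hdsum.comp_injective (add_left_injective c)
    have hs2 : Summable (fun n : ℕ => d ((n : ℤ) + c)) := by
      simpa [Function.comp_def] using hsc.comp_injective (fun a b h => by exact_mod_cast h : Function.Injective (Nat.cast : ℕ → ℤ))
    refine ⟨hs2, ?_⟩
    calc ∑' n : ℕ, d ((n : ℤ) + c) ≤ ∑' i : ℤ, d (i + c) :=
          Summable.tsum_le_tsum_of_inj (fun n : ℕ => (n : ℤ)) (fun a b h => by exact_mod_cast h : Function.Injective (Nat.cast : ℕ → ℤ))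
            (fun _ _ => hdnn _) (fun _ => le_rfl) hs2 hsc
      _ = ∑' i : ℤ, d i := by
          simpa using (Equiv.addRight c).tsum_eq d
      _ = D := hDZ
  have hD0 : 0 ≤ D := tsum_nonneg fun n => hdnn _
  set E : ℝ := |1 - 2 * ε| with hE
  have hE0 : 0 ≤ E := abs_nonneg _
  have hE1 : E ≤ 1 + ε := by
    rw [hE, abs_le]; constructor <;> linarith
  set b : ℤ → ℝ := fun i =>
    lam * (2 * ε * (2 * d (i - 1) + 2 * d i + d (i + g) + d (i - 1 - g))
      + E * (2 * d (i - 1) + 2 * d i)) + (d i + d (i + 1)) with hb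
  have hpt : ∀ i : ℤ, |po2geDrift lam ε g x i - po2geDrift lam ε g y i| ≤ b i := by
    intro i
    have hxb1 := hxbd (i + g); have hxb2 := hxbd (i - 1 - g)
    have hxb3 := hxbd (i - 1); have hxb4 := hxbd i
    have hyb1 := hybd (i - 1); have hyb2 := hybd i
    have habs : ∀ u v : ℝ, |u - v| ≤ |u| + |v| := by
      intro u v
      calc |u - v| = |u + -v| := by rw [sub_eq_add_neg]
        _ ≤ |u| + |-v| := abs_add_le _ _
        _ = |u| + |v| := by rw [abs_neg]
    have hU : |((x (i-1) - y (i-1)) - (x i - y i)) * (x (i+g) + x (i-1-g))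
        + (y (i-1) - y i) * ((x (i+g) - y (i+g)) + (x (i-1-g) - y (i-1-g)))|
        ≤ 2 * d (i-1) + 2 * d i + d (i+g) + d (i-1-g) := by
      have t1 : |((x (i-1) - y (i-1)) - (x i - y i)) * (x (i+g) + x (i-1-g))|
          ≤ 2 * d (i-1) + 2 * d i := by
        rw [abs_mul]
        have h2 : |x (i+g) + x (i-1-g)| ≤ 2 := by
          rw [abs_le]; constructor <;> linarith [hxb1.1, hxb1.2, hxb2.1, hxb2.2]
        calc |(x (i-1) - y (i-1)) - (x i - y i)| * |x (i+g) + x (i-1-g)|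
            ≤ (d (i-1) + d i) * 2 :=
              mul_le_mul (habs _ _) h2 (abs_nonneg _) (by positivity)
          _ = 2 * d (i-1) + 2 * d i := by ring
      have t2 : |(y (i-1) - y i) * ((x (i+g) - y (i+g)) + (x (i-1-g) - y (i-1-g)))|
          ≤ d (i+g) + d (i-1-g) := by
        rw [abs_mul]
        have h1 : |y (i-1) - y i| ≤ 1 := by
          rw [abs_le]; constructor <;> linarith [hyb1.1, hyb1.2, hyb2.1, hyb2.2]
        calc |y (i-1) - y i| * |(x (i+g) - y (i+g)) + (x (i-1-g) - y (i-1-g))|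
            ≤ 1 * (d (i+g) + d (i-1-g)) :=
              mul_le_mul h1 (abs_add_le _ _) (abs_nonneg _) zero_le_one
          _ = d (i+g) + d (i-1-g) := one_mul _
      calc |((x (i-1) - y (i-1)) - (x i - y i)) * (x (i+g) + x (i-1-g))
            + (y (i-1) - y i) * ((x (i+g) - y (i+g)) + (x (i-1-g) - y (i-1-g)))|
          ≤ |((x (i-1) - y (i-1)) - (x i - y i)) * (x (i+g) + x (i-1-g))|
            + |(y (i-1) - y i) * ((x (i+g) - y (i+g)) + (x (i-1-g) - y (i-1-g)))| :=
            abs_add_le _ _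
        _ ≤ 2 * d (i-1) + 2 * d i + d (i+g) + d (i-1-g) := by linarith
    have hV : |(x (i-1) - y (i-1)) * (x (i-1) + y (i-1)) - (x i - y i) * (x i + y i)|
        ≤ 2 * d (i-1) + 2 * d i := by
      have t3 : |(x (i-1) - y (i-1)) * (x (i-1) + y (i-1))| ≤ 2 * d (i-1) := by
        rw [abs_mul]
        have h2 : |x (i-1) + y (i-1)| ≤ 2 := by
          rw [abs_le]; constructor <;> linarith [hxb3.1, hxb3.2, hyb1.1, hyb1.2]
        calc |x (i-1) - y (i-1)| * |x (i-1) + y (i-1)| ≤ d (i-1) * 2 :=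
              mul_le_mul_of_nonneg_left h2 (abs_nonneg _)
          _ = 2 * d (i-1) := by ring
      have t4 : |(x i - y i) * (x i + y i)| ≤ 2 * d i := by
        rw [abs_mul]
        have h2 : |x i + y i| ≤ 2 := by
          rw [abs_le]; constructor <;> linarith [hxb4.1, hxb4.2, hyb2.1, hyb2.2]
        calc |x i - y i| * |x i + y i| ≤ d i * 2 :=
              mul_le_mul_of_nonneg_left h2 (abs_nonneg _)
          _ = 2 * d i := by ring
      calc |(x (i-1) - y (i-1)) * (x (i-1) + y (i-1)) - (x i - y i) * (x i + y i)|
          ≤ |(x (i-1) - y (i-1)) * (x (i-1) + y (i-1))| + |(x i - y i) * (x i + y i)| :=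
            habs _ _
        _ ≤ 2 * d (i-1) + 2 * d i := by linarith
    have hAid : po2geArr ε g x i - po2geArr ε g y i
        = 2 * ε * (((x (i-1) - y (i-1)) - (x i - y i)) * (x (i+g) + x (i-1-g))
            + (y (i-1) - y i) * ((x (i+g) - y (i+g)) + (x (i-1-g) - y (i-1-g))))
          + (1 - 2*ε) * ((x (i-1) - y (i-1)) * (x (i-1) + y (i-1))
            - (x i - y i) * (x i + y i)) := by
      simp only [po2geArr]; ring
    have harr : |po2geArr ε g x i - po2geArr ε g y i|
        ≤ 2 * ε * (2 * d (i-1) + 2 * d i + d (i+g) + d (i-1-g))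
          + E * (2 * d (i-1) + 2 * d i) := by
      rw [hAid]
      have step1 := abs_add_le
        (2 * ε * (((x (i-1) - y (i-1)) - (x i - y i)) * (x (i+g) + x (i-1-g))
            + (y (i-1) - y i) * ((x (i+g) - y (i+g)) + (x (i-1-g) - y (i-1-g)))))
        ((1 - 2*ε) * ((x (i-1) - y (i-1)) * (x (i-1) + y (i-1))
            - (x i - y i) * (x i + y i)))
      refine step1.trans ?_
      rw [abs_mul (2 * ε), abs_mul (1 - 2*ε), abs_of_nonneg (by positivity : (0:ℝ) ≤ 2 * ε)]
      have g1 : 2 * ε * |((x (i-1) - y (i-1)) - (x i - y i)) * (x (i+g) + x (i-1-g))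
            + (y (i-1) - y i) * ((x (i+g) - y (i+g)) + (x (i-1-g) - y (i-1-g)))|
          ≤ 2 * ε * (2 * d (i-1) + 2 * d i + d (i+g) + d (i-1-g)) :=
        mul_le_mul_of_nonneg_left hU (by positivity)
      have g2 : |1 - 2*ε| * |(x (i-1) - y (i-1)) * (x (i-1) + y (i-1))
            - (x i - y i) * (x i + y i)|
          ≤ E * (2 * d (i-1) + 2 * d i) := by
        rw [← hE]
        exact mul_le_mul_of_nonneg_left hV hE0
      linarith
    have hDid : po2geDrift lam ε g x i - po2geDrift lam ε g y i
        = lam * (po2geArr ε g x i - po2geArr ε g y i)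
          - ((x i - y i) - (x (i+1) - y (i+1))) := by
      simp only [po2geDrift]; ring
    rw [hDid, hb]
    have w1 : |(x i - y i) - (x (i+1) - y (i+1))| ≤ d i + d (i+1) := habs _ _
    calc |lam * (po2geArr ε g x i - po2geArr ε g y i)
          - ((x i - y i) - (x (i+1) - y (i+1)))|
        ≤ |lam * (po2geArr ε g x i - po2geArr ε g y i)|
          + |(x i - y i) - (x (i+1) - y (i+1))| := habs _ _
      _ = lam * |po2geArr ε g x i - po2geArr ε g y i|
          + |(x i - y i) - (x (i+1) - y (i+1))| := by
          rw [abs_mul, abs_of_pos hlam]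
      _ ≤ lam * (2 * ε * (2 * d (i-1) + 2 * d i + d (i+g) + d (i-1-g))
            + E * (2 * d (i-1) + 2 * d i)) + (d i + d (i+1)) := by
          have := mul_le_mul_of_nonneg_left harr hlam.le
          linarith
  -- split the bound into shifted sums
  have hsplit : (fun n : ℕ => b ((n:ℤ) + 1)) = fun n : ℕ =>
      (lam * (4*ε + 2*E)) * d ((n:ℤ) + 0)
      + ((lam * (4*ε + 2*E) + 1) * d ((n:ℤ) + 1)
      + (1 * d ((n:ℤ) + 2)
      + ((lam * (2*ε)) * d ((n:ℤ) + (1 + (g:ℤ)))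
      + (lam * (2*ε)) * d ((n:ℤ) + (-(g:ℤ)))))) := by
    funext n
    have e1 : (n:ℤ) + 1 - 1 = (n:ℤ) + 0 := by ring
    have e2 : (n:ℤ) + 1 + (g:ℤ) = (n:ℤ) + (1 + (g:ℤ)) := by ring
    have e3 : (n:ℤ) + 1 - 1 - (g:ℤ) = (n:ℤ) + (-(g:ℤ)) := by ring
    have e4 : (n:ℤ) + 1 + 1 = (n:ℤ) + 2 := by ring
    rw [hb]
    simp only [e1, e2, e3, e4]
    ring
  have h0 := ((key 0).1).mul_left (lam * (4*ε + 2*E))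
  have h1 := ((key 1).1).mul_left (lam * (4*ε + 2*E) + 1)
  have h2 := ((key 2).1).mul_left (1 : ℝ)
  have h3 := ((key (1 + (g:ℤ))).1).mul_left (lam * (2*ε))
  have h4 := ((key (-(g:ℤ))).1).mul_left (lam * (2*ε))
  have hbsum : Summable (fun n : ℕ => b ((n:ℤ) + 1)) := by
    rw [hsplit]; exact h0.add (h1.add (h2.add (h3.add h4)))
  have hA0 : (0:ℝ) ≤ lam * (4*ε + 2*E) :=
    mul_nonneg hlam.le (by linarith)
  have hA1 : (0:ℝ) ≤ lam * (4*ε + 2*E) + 1 := by linarith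
  have hA3 : (0:ℝ) ≤ lam * (2*ε) := by positivity
  have sumk : lam * (4*ε + 2*E) + (lam * (4*ε + 2*E) + 1) + 1
      + lam * (2*ε) + lam * (2*ε) ≤ lam * (16*ε+4) + 2 := by nlinarith
  calc ∑' n : ℕ, |po2geDrift lam ε g x (n + 1) - po2geDrift lam ε g y (n + 1)|
      ≤ ∑' n : ℕ, b ((n:ℤ) + 1) := by
        refine Summable.tsum_le_tsum (fun n => hpt _) ?_ hbsum
        exact Summable.of_nonneg_of_le (fun n => abs_nonneg _) (fun n => hpt _) hbsum
    _ = (lam * (4*ε + 2*E)) * ∑' n : ℕ, d ((n:ℤ) + 0)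
      + ((lam * (4*ε + 2*E) + 1) * ∑' n : ℕ, d ((n:ℤ) + 1)
      + (1 * ∑' n : ℕ, d ((n:ℤ) + 2)
      + ((lam * (2*ε)) * ∑' n : ℕ, d ((n:ℤ) + (1 + (g:ℤ)))
      + (lam * (2*ε)) * ∑' n : ℕ, d ((n:ℤ) + (-(g:ℤ)))))) := by
        rw [hsplit, Summable.tsum_add h0 (h1.add (h2.add (h3.add h4))),
          Summable.tsum_add h1 (h2.add (h3.add h4)), Summable.tsum_add h2 (h3.add h4),
          Summable.tsum_add h3 h4, tsum_mul_left, tsum_mul_left, tsum_mul_left,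
          tsum_mul_left, tsum_mul_left]
    _ ≤ (lam * (4*ε + 2*E)) * D + ((lam * (4*ε + 2*E) + 1) * D
        + (1 * D + ((lam * (2*ε)) * D + (lam * (2*ε)) * D))) := by
        gcongr <;> first
          | exact (key _).2
          | exact hA0
          | exact hA1
          | exact hA3
          | norm_num
    _ = (lam * (4*ε + 2*E) + (lam * (4*ε + 2*E) + 1) + 1
        + lam * (2*ε) + lam * (2*ε)) * D := by ring
    _ ≤ (lam * (16*ε+4) + 2) * D := mul_le_mul_of_nonneg_right sumk hD0
    _ = (lam * (16 * ε + 4) + 2) * ∑' n : ℕ, |x (n + 1) - y (n + 1)| := by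
        rw [hDdef, hd]
end

section
/- Let S be the set of sequences x : ℕ → ℝ with x_0 = 1, 1 ≥ x_i ≥ x_{i+1} ≥ 0 for all i ≥ 1, and Σ_{i≥1} x_i < ∞, equipped with the ℓ¹ norm. For λ > 0 and ε ∈ [0,1], define F_i(x) = λ·[(1−ε)(x_{i−1}² − x_i²) + ε((1−x_i)² − (1−x_{i−1})²)] − (x_i − x_{i+1}). Then F is Lipschitz with constant 4λ + 2 under the ℓ¹ norm. -/
set_option maxHeartbeats 1000000

/-- Drift function of the Po2-ε mean-field. -/
noncomputable def po2epsDrift (lam ε : ℝ) (s : ℕ → ℝ) (i : ℕ) : ℝ :=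
  lam * ((1 - ε) * ((s (i - 1))^2 - (s i)^2)
          + ε * ((1 - s i)^2 - (1 - s (i - 1))^2))
    - (s i - s (i + 1))

lemma sq_diff_abs_le {a b : ℝ} (ha0 : 0 ≤ a) (ha1 : a ≤ 1) (hb0 : 0 ≤ b) (hb1 : b ≤ 1) :
    |a^2 - b^2| ≤ 2 * |a - b| := by
  have h : a^2 - b^2 = (a + b) * (a - b) := by ring
  rw [h, abs_mul]
  have hab : |a + b| ≤ 2 := abs_le.2 ⟨by linarith, by linarith⟩
  exact mul_le_mul_of_nonneg_right hab (abs_nonneg _)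

theorem po2epsDrift_lipschitz (lam ε : ℝ) (hlam : 0 < lam)
    (hε0 : 0 ≤ ε) (hε1 : ε ≤ 1)
    (x y : ℕ → ℝ)
    (hx0 : x 0 = 1) (hy0 : y 0 = 1)
    (hxmono : ∀ i : ℕ, x (i + 1) ≤ x i) (hymono : ∀ i : ℕ, y (i + 1) ≤ y i)
    (hxbd : ∀ i : ℕ, 0 ≤ x i ∧ x i ≤ 1) (hybd : ∀ i : ℕ, 0 ≤ y i ∧ y i ≤ 1)
    (hxsum : Summable (fun n : ℕ => x (n + 1)))
    (hysum : Summable (fun n : ℕ => y (n + 1))) :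
    ∑' n : ℕ, |po2epsDrift lam ε x (n + 1) - po2epsDrift lam ε y (n + 1)|
      ≤ (4 * lam + 2) * ∑' n : ℕ, |x (n + 1) - y (n + 1)| := by
  set d : ℕ → ℝ := fun i => |x i - y i| with hd
  have hd0 : d 0 = 0 := by simp [hd, hx0, hy0]
  have hdnn : ∀ i, 0 ≤ d i := fun i => abs_nonneg _
  have hsumd1 : Summable (fun n => d (n + 1)) := by
    refine Summable.of_nonneg_of_le (fun n => abs_nonneg _) (fun n => ?_) (hxsum.add hysum)
    have h1 := hxbd (n + 1); have h2 := hybd (n + 1)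
    exact abs_le.2 ⟨by simp; nlinarith [h1.1, h2.1], by nlinarith [h1.1, h2.1]⟩
  have hsumd : Summable d := (summable_nat_add_iff 1).mp hsumd1
  have hsumd2 : Summable (fun n => d (n + 2)) := (summable_nat_add_iff 2).mpr hsumd
  set g : ℕ → ℝ := fun n => 2 * lam * (d n + d (n + 1)) + (d (n + 1) + d (n + 2)) with hg
  have hsumg : Summable g := ((hsumd.add hsumd1).mul_left _).add (hsumd1.add hsumd2)
  have hpt : ∀ n : ℕ,
      |po2epsDrift lam ε x (n + 1) - po2epsDrift lam ε y (n + 1)| ≤ g n := by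
    intro n
    have hxa := hxbd n; have hxb := hxbd (n + 1); have hxc := hxbd (n + 2)
    have hya := hybd n; have hyb := hybd (n + 1); have hyc := hybd (n + 2)
    have h1 : |(x n)^2 - (y n)^2| ≤ 2 * d n :=
      sq_diff_abs_le hxa.1 hxa.2 hya.1 hya.2
    have h2 : |(x (n+1))^2 - (y (n+1))^2| ≤ 2 * d (n + 1) :=
      sq_diff_abs_le hxb.1 hxb.2 hyb.1 hyb.2
    have h3 : |(1 - x n)^2 - (1 - y n)^2| ≤ 2 * d n := by
      have := sq_diff_abs_le (a := 1 - x n) (b := 1 - y n)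
        (by linarith [hxa.2]) (by linarith [hxa.1]) (by linarith [hya.2]) (by linarith [hya.1])
      have heq : |(1 - x n) - (1 - y n)| = d n := by
        rw [show (1 - x n) - (1 - y n) = -(x n - y n) by ring, abs_neg]
      rwa [heq] at this
    have h4 : |(1 - x (n+1))^2 - (1 - y (n+1))^2| ≤ 2 * d (n + 1) := by
      have := sq_diff_abs_le (a := 1 - x (n+1)) (b := 1 - y (n+1))
        (by linarith [hxb.2]) (by linarith [hxb.1]) (by linarith [hyb.2]) (by linarith [hyb.1])
      have heq : |(1 - x (n+1)) - (1 - y (n+1))| = d (n + 1) := by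
        rw [show (1 - x (n+1)) - (1 - y (n+1)) = -(x (n+1) - y (n+1)) by ring, abs_neg]
      rwa [heq] at this
    have hidx : n + 1 - 1 = n := rfl
    set P : ℝ := ((x n)^2 - (y n)^2) - ((x (n+1))^2 - (y (n+1))^2) with hP
    set Q : ℝ := ((1 - x (n+1))^2 - (1 - y (n+1))^2) - ((1 - x n)^2 - (1 - y n)^2) with hQ
    set R : ℝ := (x (n+1) - y (n+1)) - (x (n+2) - y (n+2)) with hR
    have hDeq : po2epsDrift lam ε x (n + 1) - po2epsDrift lam ε y (n + 1)
        = lam * ((1 - ε) * P + ε * Q) - R := by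
      simp only [po2epsDrift, hidx, hP, hQ, hR]
      ring
    have hPle : |P| ≤ 2 * d n + 2 * d (n + 1) :=
      (abs_sub _ _).trans (by linarith)
    have hQle : |Q| ≤ 2 * d n + 2 * d (n + 1) :=
      (abs_sub _ _).trans (by linarith)
    have hRle : |R| ≤ d (n + 1) + d (n + 2) :=
      (abs_sub _ _).trans (by simp [hd])
    have hW : |(1 - ε) * P + ε * Q| ≤ 2 * d n + 2 * d (n + 1) := by
      calc |(1 - ε) * P + ε * Q| ≤ |(1 - ε) * P| + |ε * Q| := abs_add_le _ _
        _ = (1 - ε) * |P| + ε * |Q| := by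
            rw [abs_mul, abs_mul, abs_of_nonneg (by linarith : (0:ℝ) ≤ 1 - ε),
              abs_of_nonneg hε0]
        _ ≤ 2 * d n + 2 * d (n + 1) := by nlinarith [abs_nonneg P, abs_nonneg Q]
    rw [hDeq]
    calc |lam * ((1 - ε) * P + ε * Q) - R|
        ≤ |lam * ((1 - ε) * P + ε * Q)| + |R| := abs_sub _ _
      _ = lam * |(1 - ε) * P + ε * Q| + |R| := by rw [abs_mul, abs_of_pos hlam]
      _ ≤ lam * (2 * d n + 2 * d (n + 1)) + (d (n + 1) + d (n + 2)) := by
          gcongr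
      _ ≤ g n := by simp only [hg]; nlinarith
  have hsumLHS : Summable (fun n =>
      |po2epsDrift lam ε x (n + 1) - po2epsDrift lam ε y (n + 1)|) :=
    Summable.of_nonneg_of_le (fun n => abs_nonneg _) hpt hsumg
  have hT0 : ∑' n, d n = ∑' n, d (n + 1) := by
    rw [Summable.tsum_eq_zero_add hsumd, hd0, zero_add]
  have hT2 : ∑' n, d (n + 2) ≤ ∑' n, d (n + 1) := by
    have := Summable.tsum_eq_zero_add hsumd1
    have h2 : ∑' n, d (n + 1 + 1) = ∑' n, d (n + 2) := by norm_num
    rw [h2] at this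
    have := hdnn 1
    linarith [this]
  have hT1nn : 0 ≤ ∑' n, d (n + 1) := tsum_nonneg (fun n => hdnn _)
  calc ∑' n : ℕ, |po2epsDrift lam ε x (n + 1) - po2epsDrift lam ε y (n + 1)|
      ≤ ∑' n, g n := Summable.tsum_le_tsum hpt hsumLHS hsumg
    _ = 2 * lam * (∑' n, d n + ∑' n, d (n + 1)) + (∑' n, d (n + 1) + ∑' n, d (n + 2)) := by
        rw [Summable.tsum_add ((hsumd.add hsumd1).mul_left _) (hsumd1.add hsumd2),
          tsum_mul_left, Summable.tsum_add hsumd hsumd1, Summable.tsum_add hsumd1 hsumd2]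
    _ ≤ (4 * lam + 2) * ∑' n, d (n + 1) := by
        rw [hT0]; nlinarith [hT2, hT1nn, hlam.le]
    _ = (4 * lam + 2) * ∑' n : ℕ, |x (n + 1) - y (n + 1)| := rfl
end

section
/- Let 0 < λ < 1 and g ≥ 0 be an integer. Define z* : ℤ → ℝ by z*_i = 1 for i ≤ 0 and z*_i = λ·(z*_{i−1−g})² for i ≥ 1. Then z* is nonincreasing, takes values in [0,1], and Σ_{i≥1} z*_i = (g+1)·Σ_{i≥1} λ^{2^i − 1} < ∞. -/
theorem po2ge_dominating_sequence (lam : ℝ) (hlam0 : 0 < lam) (hlam1 : lam < 1)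
    (g : ℕ) (z : ℤ → ℝ)
    (hz0 : ∀ i : ℤ, i ≤ 0 → z i = 1)
    (hzrec : ∀ i : ℤ, 1 ≤ i → z i = lam * (z (i - 1 - g))^2) :
    (∀ i j : ℤ, i ≤ j → z j ≤ z i) ∧
    (∀ i : ℤ, 0 ≤ z i ∧ z i ≤ 1) ∧
    Summable (fun n : ℕ => z (n + 1)) ∧
    Summable (fun n : ℕ => lam ^ (2 ^ (n + 1) - 1)) ∧
    ∑' n : ℕ, z (n + 1) = ((g : ℝ) + 1) * ∑' n : ℕ, lam ^ (2 ^ (n + 1) - 1) := by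
  -- explicit block formula
  have key : ∀ k r : ℕ, r ≤ g → z ((k : ℤ) * (g + 1) + 1 + r) = lam ^ (2 ^ (k + 1) - 1) := by
    intro k
    induction k with
    | zero =>
      intro r hr
      rw [hzrec _ (by push_cast; omega)]
      rw [show ((0 : ℕ) : ℤ) * (g + 1) + 1 + r - 1 - g = (r : ℤ) - g by push_cast; ring]
      rw [hz0 _ (by omega)]
      norm_num
    | succ k ih =>
      intro r hr
      rw [hzrec _ (by push_cast; nlinarith [Int.natCast_nonneg g, Int.natCast_nonneg k,
        Int.natCast_nonneg r])]
      rw [show ((k + 1 : ℕ) : ℤ) * (g + 1) + 1 + r - 1 - g = (k : ℤ) * (g + 1) + 1 + r by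
        push_cast; ring]
      rw [ih r hr]
      rw [← pow_mul, ← pow_succ']
      congr 1
      have h1 : (1 : ℕ) ≤ 2 ^ (k + 1) := Nat.one_le_two_pow
      have h2 : 2 ^ (k + 1 + 1) = 2 ^ (k + 1) * 2 := pow_succ 2 (k + 1)
      omega
  have formula : ∀ n : ℕ, z ((n : ℤ) + 1) = lam ^ (2 ^ (n / (g + 1) + 1) - 1) := by
    intro n
    have hr : n % (g + 1) ≤ g := by
      have := Nat.mod_lt n (y := g + 1) (by omega); omega
    have hn : (n / (g + 1)) * (g + 1) + 1 + (n % (g + 1)) = n + 1 := by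
      have := Nat.div_add_mod' n (g + 1); omega
    have harg : ((n / (g + 1) : ℕ) : ℤ) * ((g : ℤ) + 1) + 1 + ((n % (g + 1) : ℕ) : ℤ)
        = (n : ℤ) + 1 := by exact_mod_cast hn
    rw [← harg, key _ _ hr]
  -- bounds
  have hb : ∀ i : ℤ, 0 ≤ z i ∧ z i ≤ 1 := by
    intro i
    by_cases hi : i ≤ 0
    · rw [hz0 i hi]; norm_num
    · have h1 : 1 ≤ i := by omega
      have hi' : i = ((i - 1).toNat : ℤ) + 1 := by omega
      rw [hi', formula]
      exact ⟨pow_nonneg hlam0.le _, pow_le_one₀ hlam0.le hlam1.le⟩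
  -- monotone
  have hmono : ∀ i j : ℤ, i ≤ j → z j ≤ z i := by
    intro i j hij
    by_cases hj : j ≤ 0
    · rw [hz0 i (by omega), hz0 j hj]
    · by_cases hi : i ≤ 0
      · rw [hz0 i hi]; exact (hb j).2
      · have hi' : i = ((i - 1).toNat : ℤ) + 1 := by omega
        have hj' : j = ((j - 1).toNat : ℤ) + 1 := by omega
        rw [hi', hj', formula, formula]
        apply pow_le_pow_of_le_one hlam0.le hlam1.le
        have hab : (i - 1).toNat ≤ (j - 1).toNat := by omega
        have hd := Nat.div_le_div_right (c := g + 1) hab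
        have hp := Nat.pow_le_pow_right (by norm_num : 1 ≤ 2)
          (Nat.add_le_add_right hd 1)
        omega
  -- summability of the geometric-like series
  have hf : Summable (fun n : ℕ => lam ^ (2 ^ (n + 1) - 1)) := by
    apply Summable.of_nonneg_of_le (fun n => pow_nonneg hlam0.le _)
      (fun n => pow_le_pow_of_le_one hlam0.le hlam1.le ?_)
      (summable_geometric_of_lt_one hlam0.le hlam1)
    have h1 := Nat.lt_two_pow_self (n := n)
    have h2 : 2 ^ (n + 1) = 2 ^ n * 2 := pow_succ 2 n
    omega
  -- product reformulation
  set G : ℕ × Fin (g + 1) → ℝ := fun p => lam ^ (2 ^ (p.1 + 1) - 1) with hGdef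
  have hfiber : ∀ k : ℕ, Summable fun r : Fin (g + 1) => G (k, r) := fun k =>
    .of_finite
  have hG : Summable G := by
    rw [summable_prod_of_nonneg (fun p => pow_nonneg hlam0.le _)]
    refine ⟨hfiber, ?_⟩
    have : (fun k : ℕ => ∑' r : Fin (g + 1), G (k, r))
        = fun k : ℕ => ((g : ℝ) + 1) * lam ^ (2 ^ (k + 1) - 1) := by
      funext k
      rw [tsum_fintype]
      simp [hGdef, Finset.sum_const, mul_comm]
    rw [this]
    exact hf.mul_left _
  have hcomp : (fun n : ℕ => z ((n : ℤ) + 1)) = G ∘ (Nat.divModEquiv (g + 1)) := by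
    funext n
    simp only [Function.comp_apply, Nat.divModEquiv, Equiv.coe_fn_mk, hGdef]
    exact formula n
  have hsum : Summable (fun n : ℕ => z ((n : ℤ) + 1)) := by
    rw [hcomp]
    exact hG.comp_injective (Nat.divModEquiv (g + 1)).injective
  refine ⟨hmono, hb, hsum, hf, ?_⟩
  calc ∑' n : ℕ, z ((n : ℤ) + 1)
      = ∑' p : ℕ × Fin (g + 1), G p := by
        rw [hcomp]; exact (Nat.divModEquiv (g + 1)).tsum_eq G
    _ = ∑' (k : ℕ) (r : Fin (g + 1)), G (k, r) := Summable.tsum_prod' hG hfiber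
    _ = ∑' k : ℕ, ((g : ℝ) + 1) * lam ^ (2 ^ (k + 1) - 1) := by
        congr 1; funext k; rw [tsum_fintype]
        simp [hGdef, Finset.sum_const, mul_comm]
    _ = ((g : ℝ) + 1) * ∑' n : ℕ, lam ^ (2 ^ (n + 1) - 1) := tsum_mul_left
end

section
/- For any 0 < λ < 1, the series Σ_{i≥1} λ^{2^i − 1} converges, and moreover limsup_{λ→1⁻} [Σ_{i≥1} λ^{2^i−1}] / log(1/(1−λ)) ≤ 1/log 2. -/
open Filter Real

lemma po2_summable (lam : ℝ) (h0 : 0 < lam) (h1 : lam < 1) :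
    Summable (fun n : ℕ => lam ^ (2 ^ (n + 1) - 1)) := by
  apply Summable.of_nonneg_of_le (fun n => pow_nonneg h0.le _)
    (fun n => pow_le_pow_of_le_one h0.le h1.le ?_)
    ((summable_nat_add_iff 1).mpr (summable_geometric_of_lt_one h0.le h1))
  have := Nat.lt_two_pow_self (n := n+1)
  omega

set_option maxHeartbeats 1000000 in
lemma po2_bound (lam : ℝ) (hhalf : 1/2 ≤ lam) (h1 : lam < 1) :
    (∑' n : ℕ, lam ^ (2 ^ (n + 1) - 1)) ≤
      Real.log (1 / (1 - lam)) / Real.log 2 + 2 := by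
  have h0 : 0 < lam := by linarith
  set L : ℝ := Real.log (1 / (1 - lam)) with hLdef
  have ht : 0 < 1 - lam := by linarith
  have hL2 : Real.log 2 ≤ L := by
    apply Real.log_le_log (by norm_num)
    rw [le_div_iff₀ ht]; linarith
  have hlog2 : (0:ℝ) < Real.log 2 := Real.log_pos (by norm_num)
  have hL : 0 < L := lt_of_lt_of_le hlog2 hL2
  set N : ℕ := ⌈L / Real.log 2⌉₊ with hNdef
  -- 2^N ≥ 1/(1-lam)
  have h2N : 1 / (1 - lam) ≤ (2:ℝ) ^ N := by
    have h1' : L / Real.log 2 ≤ N := Nat.le_ceil _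
    have h2 : L ≤ N * Real.log 2 := by
      rw [div_le_iff₀ hlog2] at h1'; linarith
    calc 1 / (1 - lam) = Real.exp L := (Real.exp_log (by positivity)).symm
      _ ≤ Real.exp (N * Real.log 2) := Real.exp_le_exp.mpr h2
      _ = (2:ℝ) ^ N := by
          rw [← Real.log_pow, Real.exp_log (by positivity)]
  -- q ≤ e⁻¹
  set q : ℝ := lam ^ (2 ^ N) with hqdef
  have hq0 : 0 ≤ q := pow_nonneg h0.le _
  have hqe : q ≤ Real.exp (-1) := by
    have hlog : Real.log lam ≤ -(1 - lam) := by
      have := Real.log_le_sub_one_of_pos h0; linarith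
    have key : ((2^N : ℕ) : ℝ) * Real.log lam ≤ -1 := by
      have hpow : (1:ℝ) / (1 - lam) ≤ ((2^N : ℕ) : ℝ) := by push_cast; exact h2N
      calc ((2^N : ℕ) : ℝ) * Real.log lam ≤ ((2^N : ℕ) : ℝ) * (-(1-lam)) := by
            apply mul_le_mul_of_nonneg_left hlog (by positivity)
        _ ≤ (1/(1-lam)) * (-(1-lam)) := by
            apply mul_le_mul_of_nonpos_right hpow (by linarith)
        _ = -1 := by field_simp
    calc q = Real.exp (((2^N : ℕ) : ℝ) * Real.log lam) := by
          rw [← Real.log_pow, Real.exp_log (pow_pos h0 _)]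
      _ ≤ Real.exp (-1) := Real.exp_le_exp.mpr key
  have hqhalf : q ≤ 1/2 := by
    have h2e : (2:ℝ) ≤ Real.exp 1 := by have := Real.add_one_le_exp 1; linarith
    have : Real.exp (-1) ≤ 1/2 := by
      rw [Real.exp_neg]
      rw [inv_le_comm₀ (Real.exp_pos 1) (by norm_num)]
      simpa using h2e
    linarith
  have hq1 : q < 1 := by linarith
  have hf := po2_summable lam h0 h1
  -- split sum
  rw [← hf.sum_add_tsum_nat_add N]
  have head : ∑ i ∈ Finset.range N, lam ^ (2 ^ (i + 1) - 1) ≤ N := by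
    calc ∑ i ∈ Finset.range N, lam ^ (2 ^ (i + 1) - 1)
        ≤ ∑ i ∈ Finset.range N, 1 :=
          Finset.sum_le_sum (fun i _ => pow_le_one₀ h0.le h1.le)
      _ = N := by simp
  have hterm : ∀ k : ℕ, lam ^ (2 ^ (k + N + 1) - 1) ≤ q ^ (k + 1) := by
    intro k
    rw [hqdef, ← pow_mul]
    apply pow_le_pow_of_le_one h0.le h1.le
    have h1' : k + 2 ≤ 2^(k+1) := by
      have := Nat.lt_two_pow_self (n := k+1); omega
    have h2' : 2^N * (k+2) ≤ 2^N * 2^(k+1) := Nat.mul_le_mul_left _ h1'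
    have h3' : 2^N * 2^(k+1) = 2^(k+N+1) := by rw [← pow_add]; ring_nf
    have h4' : 1 ≤ 2^N := Nat.one_le_two_pow
    have h5' : 2^N * (k+1) + 1 ≤ 2^(k+N+1) := by
      calc 2^N * (k+1) + 1 ≤ 2^N * (k+1) + 2^N := by omega
        _ = 2^N * (k+2) := by ring
        _ ≤ 2^N * 2^(k+1) := h2'
        _ = 2^(k+N+1) := h3'
    exact Nat.le_sub_one_of_lt h5'

  have hsumq : Summable (fun k : ℕ => q ^ (k+1)) :=
    (summable_nat_add_iff 1).mpr (summable_geometric_of_lt_one hq0 hq1)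
  have hfs : Summable (fun k : ℕ => lam ^ (2 ^ (k + N + 1) - 1)) :=
    (summable_nat_add_iff (f := fun n : ℕ => lam ^ (2 ^ (n + 1) - 1)) N).mpr hf
  have tail : ∑' k : ℕ, lam ^ (2 ^ (k + N + 1) - 1) ≤ ∑' k : ℕ, q ^ (k + 1) :=
    Summable.tsum_le_tsum hterm hfs hsumq
  have hqsum : ∑' k : ℕ, q ^ (k + 1) = q * (1 - q)⁻¹ := by
    have hc : ∀ k : ℕ, q ^ (k+1) = q * q ^ k := fun k => by rw [pow_succ, mul_comm]
    rw [tsum_congr hc, tsum_mul_left, tsum_geometric_of_lt_one hq0 hq1]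
  have tail1 : ∑' k : ℕ, lam ^ (2 ^ (k + N + 1) - 1) ≤ 1 := by
    rw [hqsum] at tail
    have : q * (1 - q)⁻¹ ≤ 1 := by
      rw [mul_inv_le_iff₀ (by linarith)]
      linarith
    linarith
  have hNle : (N : ℝ) ≤ L / Real.log 2 + 1 := by
    have := Nat.ceil_lt_add_one (a := L / Real.log 2) (by positivity)
    exact le_of_lt (by exact_mod_cast this)
  calc ∑ i ∈ Finset.range N, lam ^ (2 ^ (i + 1) - 1)
        + ∑' k : ℕ, lam ^ (2 ^ (k + N + 1) - 1)
      ≤ (N : ℝ) + 1 := add_le_add head tail1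
    _ ≤ L / Real.log 2 + 2 := by linarith

theorem po2_tail_sum_heavy_traffic :
    (∀ lam : ℝ, 0 < lam → lam < 1 →
        Summable (fun n : ℕ => lam ^ (2 ^ (n + 1) - 1))) ∧
    Filter.limsup
        (fun lam : ℝ =>
          (∑' n : ℕ, lam ^ (2 ^ (n + 1) - 1)) / Real.log (1 / (1 - lam)))
        (nhdsWithin 1 (Set.Iio 1)) ≤ 1 / Real.log 2 := by
  refine ⟨po2_summable, ?_⟩
  set l := nhdsWithin (1:ℝ) (Set.Iio 1) with hl
  have hLtop : Tendsto (fun lam : ℝ => Real.log (1 / (1 - lam))) l atTop := by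
    apply Real.tendsto_log_atTop.comp
    apply tendsto_inv_nhdsGT_zero.comp (f := fun lam : ℝ => 1 - lam) ?_ |>.congr
      (fun x => by simp [one_div])
    have h1 : Tendsto (fun lam : ℝ => 1 - lam) l (nhds 0) := by
      have hc : Continuous (fun lam : ℝ => 1 - lam) := continuous_const.sub continuous_id
      have := (hc.tendsto (1:ℝ)).mono_left (nhdsWithin_le_nhds (s := Set.Iio 1))
      simpa using this
    rw [tendsto_nhdsWithin_iff]
    refine ⟨h1, ?_⟩
    filter_upwards [self_mem_nhdsWithin] with x hx
    simp only [Set.mem_Iio] at hx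
    simp only [Set.mem_Ioi]
    linarith
  set F := fun lam : ℝ =>
    (∑' n : ℕ, lam ^ (2 ^ (n + 1) - 1)) / Real.log (1 / (1 - lam)) with hF
  set g := fun lam : ℝ => 1 / Real.log 2 + 2 / Real.log (1 / (1 - lam)) with hg
  have hlog2 : (0:ℝ) < Real.log 2 := Real.log_pos (by norm_num)
  have hmem : Set.Ioo (1/2 : ℝ) 1 ∈ l :=
    Ioo_mem_nhdsLT_of_mem (by constructor <;> norm_num)
  have hLpos : ∀ lam : ℝ, 1/2 ≤ lam → lam < 1 → 0 < Real.log (1 / (1 - lam)) := by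
    intro lam ha hb
    apply Real.log_pos
    rw [lt_div_iff₀ (by linarith)]
    linarith
  have hFg : ∀ᶠ lam in l, F lam ≤ g lam := by
    filter_upwards [hmem] with lam hlam
    obtain ⟨ha, hb⟩ := hlam
    have hL := hLpos lam ha.le hb
    have hbd := po2_bound lam ha.le hb
    have heq : (1 / Real.log 2 + 2 / Real.log (1 / (1 - lam))) * Real.log (1 / (1 - lam))
        = Real.log (1 / (1 - lam)) / Real.log 2 + 2 := by
      field_simp
    simp only [hF, hg]
    rw [div_le_iff₀ hL, heq]
    exact hbd
  have hgt : Tendsto g l (nhds (1 / Real.log 2 + 0)) :=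
    tendsto_const_nhds.add (Tendsto.div_atTop tendsto_const_nhds hLtop)
  have hF0 : ∀ᶠ lam in l, 0 ≤ F lam := by
    filter_upwards [hmem] with lam hlam
    obtain ⟨ha, hb⟩ := hlam
    have hL := hLpos lam ha.le hb
    apply div_nonneg _ hL.le
    exact tsum_nonneg (fun n => pow_nonneg (by linarith) _)
  have hcb : IsCoboundedUnder (· ≤ ·) l F :=
    isCoboundedUnder_le_of_eventually_le l hF0
  have hbd : IsBoundedUnder (· ≤ ·) l g := hgt.isBoundedUnder_le
  calc limsup F l ≤ limsup g l := limsup_le_limsup hFg hcb hbd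
    _ = 1 / Real.log 2 := by simpa using hgt.limsup_eq
end

section
/- Let G : S → ℝ^ℕ be Lipschitz with constant L under the ℓ¹ norm on S ⊆ ℓ¹, and let x : [0,∞) → S be a solution of ẋ(t) = G(x(t)) that converges in ℓ¹ to some x* ∈ S as t → ∞, with x(t) componentwise nondecreasing in t. Then G(x*) = 0. -/
/-- The state space: nonincreasing sequences in `[0,1]` with finite ℓ¹ norm. -/
def mfState : Set (ℕ → ℝ) :=
  {s | (∀ i : ℕ, s (i + 1) ≤ s i) ∧ (∀ i : ℕ, 0 ≤ s i ∧ s i ≤ 1) ∧ Summable s}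

theorem l1_limit_of_monotone_trajectory_is_equilibrium
    (G : (ℕ → ℝ) → (ℕ → ℝ)) (L : ℝ) (hL : 0 ≤ L)
    (hLip : ∀ a ∈ mfState, ∀ b ∈ mfState,
        Summable (fun i => |G a i - G b i|) ∧
        ∑' i : ℕ, |G a i - G b i| ≤ L * ∑' i : ℕ, |a i - b i|)
    (x : ℝ → ℕ → ℝ) (xs : ℕ → ℝ)
    (hxS : ∀ t : ℝ, 0 ≤ t → x t ∈ mfState) (hxsS : xs ∈ mfState)
    (hODE : ∀ i : ℕ, ∀ t : ℝ, 0 ≤ t →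
        HasDerivAt (fun s => x s i) (G (x t) i) t)
    (hmono : ∀ i : ℕ, ∀ s t : ℝ, 0 ≤ s → s ≤ t → x s i ≤ x t i)
    (hconv : Filter.Tendsto (fun t => ∑' i : ℕ, |x t i - xs i|)
        Filter.atTop (nhds 0)) :
    ∀ i : ℕ, G xs i = 0 := by
  intro i
  by_contra hne
  set c := G xs i with hc
  -- the component derivative tends to c
  have habs_le : ∀ t : ℝ, 0 ≤ t → |G (x t) i - c| ≤ L * ∑' j, |x t j - xs j| := by
    intro t ht
    obtain ⟨h1, h2⟩ := hLip (x t) (hxS t ht) xs hxsS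
    calc |G (x t) i - c| ≤ ∑' j, |G (x t) j - G xs j| :=
          Summable.le_tsum h1 i (fun j _ => abs_nonneg _)
      _ ≤ _ := h2
  have hgto : Filter.Tendsto (fun t => G (x t) i) Filter.atTop (nhds c) := by
    rw [tendsto_iff_dist_tendsto_zero]
    have hlim : Filter.Tendsto (fun t => L * ∑' j, |x t j - xs j|)
        Filter.atTop (nhds 0) := by
      have := hconv.const_mul L
      simpa using this
    refine squeeze_zero' ?_ ?_ hlim
    · exact Filter.Eventually.of_forall fun t => dist_nonneg
    · filter_upwards [Filter.eventually_ge_atTop (0 : ℝ)] with t ht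
      rw [Real.dist_eq]
      exact habs_le t ht
  rcases lt_or_gt_of_ne hne with hcneg | hcpos
  · -- c < 0 : eventually the derivative is ≤ c/2 < 0, contradicting monotonicity
    have hev : ∀ᶠ t in Filter.atTop, G (x t) i < c / 2 :=
      hgto.eventually (gt_mem_nhds (by linarith))
    obtain ⟨T₀, hT₀⟩ := Filter.eventually_atTop.mp hev
    set T := max T₀ 0 with hT
    have hT0 : (0 : ℝ) ≤ T := le_max_right _ _
    have hcont : ContinuousOn (fun s => x s i) (Set.Ici T) := fun t ht =>
      ((hODE i t (le_trans hT0 ht)).continuousAt).continuousWithinAt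
    have hdiff : DifferentiableOn ℝ (fun s => x s i) (interior (Set.Ici T)) := by
      rw [interior_Ici]
      intro t ht
      exact ((hODE i t (le_trans hT0 (le_of_lt ht))).differentiableAt).differentiableWithinAt
    have hder_le : ∀ t ∈ interior (Set.Ici T), deriv (fun s => x s i) t ≤ c / 2 := by
      rw [interior_Ici]
      intro t ht
      rw [(hODE i t (le_trans hT0 (le_of_lt ht))).deriv]
      exact le_of_lt (hT₀ t (le_trans (le_max_left _ _) (le_of_lt ht)))
    have key := (convex_Ici T).image_sub_le_mul_sub_of_deriv_le hcont hdiff hder_le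
      T Set.self_mem_Ici (T + 1) (by simp [Set.mem_Ici]) (by linarith)
    have hm := hmono i T (T + 1) hT0 (by linarith)
    nlinarith
  · -- c > 0 : eventually the derivative is ≥ c/2 > 0, contradicting boundedness
    have hev : ∀ᶠ t in Filter.atTop, c / 2 < G (x t) i :=
      hgto.eventually (lt_mem_nhds (by linarith))
    obtain ⟨T₀, hT₀⟩ := Filter.eventually_atTop.mp hev
    set T := max T₀ 0 with hT
    have hT0 : (0 : ℝ) ≤ T := le_max_right _ _
    have hcont : ContinuousOn (fun s => x s i) (Set.Ici T) := fun t ht =>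
      ((hODE i t (le_trans hT0 ht)).continuousAt).continuousWithinAt
    have hdiff : DifferentiableOn ℝ (fun s => x s i) (interior (Set.Ici T)) := by
      rw [interior_Ici]
      intro t ht
      exact ((hODE i t (le_trans hT0 (le_of_lt ht))).differentiableAt).differentiableWithinAt
    have hder_ge : ∀ t ∈ interior (Set.Ici T), c / 2 ≤ deriv (fun s => x s i) t := by
      rw [interior_Ici]
      intro t ht
      rw [(hODE i t (le_trans hT0 (le_of_lt ht))).deriv]
      exact le_of_lt (hT₀ t (le_trans (le_max_left _ _) (le_of_lt ht)))
    have hy : (0:ℝ) ≤ T + 4 / c := by positivity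
    have key := (convex_Ici T).mul_sub_le_image_sub_of_le_deriv hcont hdiff hder_ge
      T Set.self_mem_Ici (T + 4 / c) (Set.mem_Ici.2 (le_add_of_nonneg_right (by positivity))) (le_add_of_nonneg_right (by positivity))
    have hub := ((hxS (T + 4 / c) hy).2.1 i).2
    have hlb := ((hxS T hT0).2.1 i).1
    have : c / 2 * (T + 4 / c - T) = 2 := by
      field_simp
      ring
    nlinarith
end

section
/- Let M > 0 and let x : [0,∞) → ℝ^ℕ satisfy x_i(0) ∈ [0,1], x_i(t) ∈ [0,1], and x_i(t) ≤ x_i(0) + M·∫_0^t x_{i−1}(s) ds for all i ≥ 1 and t ≥ 0, with x_0(t) ≡ 1. Then x_i(t) ≤ x_i(0) + Σ_{k=0}^{i−1} x_k(0)·(Mt)^{i−k}/(i−k)! for all i ≥ 1, and consequently Σ_{i≥1} x_i(t) ≤ (1 + Σ_{i≥1} x_i(0))·e^{Mt}. -/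
open intervalIntegral Finset

theorem gronwall_iterated_bound (M : ℝ) (hM : 0 < M)
    (x : ℝ → ℕ → ℝ)
    (hcont : ∀ i : ℕ, Continuous (fun t => x t i))
    (hx0 : ∀ t : ℝ, x t 0 = 1)
    (hbd : ∀ t : ℝ, 0 ≤ t → ∀ i : ℕ, 0 ≤ x t i ∧ x t i ≤ 1)
    (hint : ∀ i : ℕ, 1 ≤ i → ∀ t : ℝ, 0 ≤ t →
        x t i ≤ x 0 i + M * ∫ s in (0:ℝ)..t, x s (i - 1))
    (hsum0 : Summable (fun n : ℕ => x 0 (n + 1))) :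
    (∀ i : ℕ, 1 ≤ i → ∀ t : ℝ, 0 ≤ t →
        x t i ≤ x 0 i + ∑ k ∈ Finset.range i,
          x 0 k * (M * t) ^ (i - k) / (Nat.factorial (i - k) : ℝ)) ∧
    (∀ t : ℝ, 0 ≤ t →
        ∑' n : ℕ, x t (n + 1) ≤ (1 + ∑' n : ℕ, x 0 (n + 1)) * Real.exp (M * t)) := by
  have part1 : ∀ i : ℕ, 1 ≤ i → ∀ t : ℝ, 0 ≤ t →
      x t i ≤ x 0 i + ∑ k ∈ Finset.range i,
        x 0 k * (M * t) ^ (i - k) / (Nat.factorial (i - k) : ℝ) := by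
    intro i hi
    induction i, hi using Nat.le_induction with
    | base =>
      intro t ht
      have h := hint 1 le_rfl t ht
      have hI : (∫ s in (0:ℝ)..t, x s 0) = t := by
        rw [intervalIntegral.integral_congr (g := fun _ => (1:ℝ)) (fun s _ => hx0 s)]
        simp
      rw [hI] at h
      simpa [hx0, Nat.factorial] using h
    | succ i hi ih =>
      intro t ht
      have h := hint (i+1) (by omega) t ht
      simp only [Nat.add_sub_cancel] at h
      have hcont2 : Continuous (fun s : ℝ => x 0 i + ∑ k ∈ Finset.range i,
          x 0 k * (M * s) ^ (i - k) / (Nat.factorial (i - k) : ℝ)) := by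
        apply Continuous.add continuous_const
        apply continuous_finset_sum
        intro k _
        fun_prop
      have hmono : (∫ s in (0:ℝ)..t, x s i) ≤
          ∫ s in (0:ℝ)..t, (x 0 i + ∑ k ∈ Finset.range i,
            x 0 k * (M * s) ^ (i - k) / (Nat.factorial (i - k) : ℝ)) := by
        apply intervalIntegral.integral_mono_on ht
        · exact (hcont i).intervalIntegrable _ _
        · exact hcont2.intervalIntegrable _ _
        · intro s hs
          exact ih s hs.1
      have hcalc : (∫ s in (0:ℝ)..t, (x 0 i + ∑ k ∈ Finset.range i,
            x 0 k * (M * s) ^ (i - k) / (Nat.factorial (i - k) : ℝ)))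
          = x 0 i * t + ∑ k ∈ Finset.range i,
            x 0 k * M ^ (i - k) * t ^ ((i - k) + 1) /
              ((Nat.factorial (i - k) : ℝ) * ((i - k : ℕ) + 1)) := by
        rw [intervalIntegral.integral_add (intervalIntegrable_const)
          ((continuous_finset_sum _ (fun k _ => by fun_prop)).intervalIntegrable _ _),
          intervalIntegral.integral_finset_sum (fun k _ => by
            exact (by fun_prop : Continuous fun s : ℝ =>
              x 0 k * (M * s) ^ (i - k) / (Nat.factorial (i - k) : ℝ)).intervalIntegrable _ _)]
        congr 1
        · simp [mul_comm]
        · apply Finset.sum_congr rfl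
          intro k _
          have : (fun s : ℝ => x 0 k * (M * s) ^ (i - k) / (Nat.factorial (i - k) : ℝ))
              = fun s : ℝ => (x 0 k * M ^ (i - k) / (Nat.factorial (i - k) : ℝ)) * s ^ (i - k) := by
            funext s; rw [mul_pow]; ring
          rw [this, intervalIntegral.integral_const_mul, integral_pow]
          have : ((i - k : ℕ) : ℝ) + 1 ≠ 0 := by positivity
          field_simp
          simp
      have hfinal : x 0 (i+1) + M * (x 0 i * t + ∑ k ∈ Finset.range i,
            x 0 k * M ^ (i - k) * t ^ ((i - k) + 1) /
              ((Nat.factorial (i - k) : ℝ) * ((i - k : ℕ) + 1)))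
          = x 0 (i+1) + ∑ k ∈ Finset.range (i+1),
            x 0 k * (M * t) ^ ((i+1) - k) / (Nat.factorial ((i+1) - k) : ℝ) := by
        rw [Finset.sum_range_succ]
        have hterm : ∀ k ∈ Finset.range i,
            M * (x 0 k * M ^ (i - k) * t ^ ((i - k) + 1) /
              ((Nat.factorial (i - k) : ℝ) * ((i - k : ℕ) + 1)))
            = x 0 k * (M * t) ^ ((i+1) - k) / (Nat.factorial ((i+1) - k) : ℝ) := by
          intro k hk
          have hk' : k < i := Finset.mem_range.mp hk
          have h1 : (i+1) - k = (i - k) + 1 := by omega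
          rw [h1, Nat.factorial_succ, mul_pow]
          have hfac : (Nat.factorial (i - k) : ℝ) ≠ 0 :=
            Nat.cast_ne_zero.mpr (Nat.factorial_ne_zero _)
          have hnn : ((i - k : ℕ) : ℝ) + 1 ≠ 0 := by positivity
          push_cast
          field_simp
          ring
        rw [mul_add, Finset.mul_sum, Finset.sum_congr rfl hterm]
        have : x 0 i * (M * t) ^ ((i+1) - i) / (Nat.factorial ((i+1) - i) : ℝ)
            = M * (x 0 i * t) := by
          have : (i+1) - i = 1 := by omega
          rw [this]; simp [Nat.factorial]; ring
        rw [this]; ring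
      calc x t (i+1) ≤ x 0 (i+1) + M * ∫ s in (0:ℝ)..t, x s i := h
        _ ≤ x 0 (i+1) + M * (x 0 i * t + ∑ k ∈ Finset.range i,
            x 0 k * M ^ (i - k) * t ^ ((i - k) + 1) /
              ((Nat.factorial (i - k) : ℝ) * ((i - k : ℕ) + 1))) := by
            rw [← hcalc]
            exact add_le_add_right (mul_le_mul_of_nonneg_left hmono hM.le) _
        _ = _ := hfinal
  refine ⟨part1, ?_⟩
  intro t ht
  have hMt : 0 ≤ M * t := mul_nonneg hM.le ht
  set f : ℕ → ℝ := fun k => x 0 k with hfdef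
  set g : ℕ → ℝ := fun m => (M * t) ^ (m + 1) / (Nat.factorial (m + 1) : ℝ) with hgdef
  have hf0 : ∀ k, 0 ≤ f k := fun k => (hbd 0 le_rfl k).1
  have hg0 : ∀ m, 0 ≤ g m := fun m => by positivity
  have hf : Summable f := (summable_nat_add_iff 1).mp hsum0
  have hg : Summable g :=
    (summable_nat_add_iff 1).mpr (Real.summable_pow_div_factorial (M * t))
  have hfg : Summable (fun p : ℕ × ℕ => f p.1 * g p.2) :=
    hf.mul_of_nonneg hg hf0 hg0
  have hb : Summable (fun n => ∑ k ∈ Finset.range (n+1), f k * g (n - k)) :=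
    summable_sum_mul_range_of_summable_mul hfg
  have key : ∀ n : ℕ, x t (n+1) ≤ x 0 (n+1) + ∑ k ∈ Finset.range (n+1), f k * g (n - k) := by
    intro n
    have h := part1 (n+1) (by omega) t ht
    have hs : (∑ k ∈ Finset.range (n+1),
        x 0 k * (M * t) ^ ((n+1) - k) / (Nat.factorial ((n+1) - k) : ℝ))
        = ∑ k ∈ Finset.range (n+1), f k * g (n - k) := by
      apply Finset.sum_congr rfl
      intro k hk
      have hk' : k < n + 1 := Finset.mem_range.mp hk
      have h1 : (n+1) - k = (n - k) + 1 := by omega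
      rw [h1]
      simp [hgdef, hfdef, mul_div_assoc]
    rwa [hs] at h
  have hsa : Summable (fun n => x 0 (n+1) + ∑ k ∈ Finset.range (n+1), f k * g (n - k)) :=
    hsum0.add hb
  have hxt : Summable (fun n => x t (n+1)) :=
    Summable.of_nonneg_of_le (fun n => (hbd t ht (n+1)).1) key hsa
  have htsum_f : ∑' k, f k = 1 + ∑' n, x 0 (n+1) := by
    rw [Summable.tsum_eq_zero_add hf]
    simp [hfdef, hx0]
  have hE : Real.exp (M * t) = ∑' n : ℕ, (M * t) ^ n / (Nat.factorial n : ℝ) := by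
    rw [Real.exp_eq_exp_ℝ, NormedSpace.exp_eq_tsum_div]
  have htsum_g : ∑' m, g m = Real.exp (M * t) - 1 := by
    have := Summable.tsum_eq_zero_add (Real.summable_pow_div_factorial (M * t))
    rw [hE, this]
    simp [hgdef]
  have hcauchy : ∑' n, ∑ k ∈ Finset.range (n+1), f k * g (n - k)
      = (∑' k, f k) * ∑' m, g m :=
    (Summable.tsum_mul_tsum_eq_tsum_sum_range hf hg hfg).symm
  calc ∑' n, x t (n+1)
      ≤ ∑' n, (x 0 (n+1) + ∑ k ∈ Finset.range (n+1), f k * g (n - k)) :=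
        Summable.tsum_le_tsum key hxt hsa
    _ = (∑' n, x 0 (n+1)) + ∑' n, ∑ k ∈ Finset.range (n+1), f k * g (n - k) :=
        Summable.tsum_add hsum0 hb
    _ = (∑' n, x 0 (n+1)) + (1 + ∑' n, x 0 (n+1)) * (Real.exp (M * t) - 1) := by
        rw [hcauchy, htsum_f, htsum_g]
    _ ≤ (1 + ∑' n, x 0 (n+1)) * Real.exp (M * t) := by nlinarith [Real.exp_pos (M * t)]
end
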